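/- Let n ≥ 2, r ≥ 1, and let T¹, …, Tʳ be symmetric n×n real matrices. Then ∑_{α=1}^r ( T^α_{11}·trace(T^α) − ∑_{j=1}^n (T^α_{1j})² ) ≥ ((n−1)/n²)·∑_{α=1}^r ( 2·trace(T^α)² − n·‖T^α‖_F² − (n−2)·|trace(T^α)|·√((n·‖T^α‖_F² − trace(T^α)²)/(n−1)) ). -/

import Mathlib

set_option maxHeartbeats 800000

lemma hineva_one (n : ℕ) (hn : 2 ≤ n) (T : Fin n → Fin n → ℝ)
    (hT : ∀ i j, T i j = T j i) :
    T ⟨0, by omega⟩ ⟨0, by omega⟩ * (∑ i, T i i)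
        - ∑ j, (T ⟨0, by omega⟩ j) ^ 2 ≥
      ((n : ℝ) - 1) / (n : ℝ) ^ 2 *
        (2 * (∑ i, T i i) ^ 2 - (n : ℝ) * (∑ i, ∑ j, (T i j) ^ 2)
          - ((n : ℝ) - 2) * |∑ i, T i i| *
            Real.sqrt (((n : ℝ) * (∑ i, ∑ j, (T i j) ^ 2) - (∑ i, T i i) ^ 2)
              / ((n : ℝ) - 1))) := by
  set z : Fin n := ⟨0, by omega⟩ with hz
  set t : ℝ := ∑ i, T i i with ht
  set f : ℝ := ∑ i, ∑ j, (T i j) ^ 2 with hf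
  set b : ℝ := ∑ j, (T z j) ^ 2 with hb
  set x : ℝ := T z z with hx
  have hn1 : (0:ℝ) < (n:ℝ) - 1 := by
    have : (2:ℝ) ≤ (n:ℝ) := by exact_mod_cast hn
    linarith
  have hnR : (2:ℝ) ≤ (n:ℝ) := by exact_mod_cast hn
  have hzmem : z ∈ (Finset.univ : Finset (Fin n)) := Finset.mem_univ z
  have hcard : ((Finset.univ.erase z).card : ℝ) = (n:ℝ) - 1 := by
    rw [Finset.card_erase_of_mem hzmem]
    simp [Fintype.card_fin]
    have : 1 ≤ n := by omega
    push_cast [Nat.cast_sub this]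
    ring
  -- s ≥ 0 : b ≥ x²
  have hs : x ^ 2 ≤ b := by
    rw [hb]
    exact Finset.single_le_sum (f := fun j => (T z j)^2) (fun j _ => sq_nonneg _) hzmem
  -- trace of the rest
  have htx : ∑ i ∈ Finset.univ.erase z, T i i = t - x := by
    rw [ht, hx, Finset.sum_erase_eq_sub hzmem]
  -- column squares equal row squares
  have hcol : ∑ i ∈ Finset.univ.erase z, (T i z) ^ 2 = b - x ^ 2 := by
    rw [hb, hx, ← Finset.sum_erase_eq_sub hzmem]
    exact Finset.sum_congr rfl fun i _ => by rw [hT i z]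
  -- frobenius lower bound
  have hrow : ∀ i ∈ Finset.univ.erase z, (T i z)^2 + (T i i)^2 ≤ ∑ j, (T i j)^2 := by
    intro i hi
    have hiz : z ≠ i := fun h => (Finset.mem_erase.mp hi).1 h.symm
    have : (T i z)^2 + (T i i)^2 = ∑ j ∈ ({z, i} : Finset (Fin n)), (T i j)^2 :=
      (Finset.sum_pair (f := fun j => (T i j)^2) hiz).symm
    rw [this]
    exact Finset.sum_le_sum_of_subset_of_nonneg (Finset.subset_univ _)
      (fun j _ _ => sq_nonneg _)
  have hfge : b + ∑ i ∈ Finset.univ.erase z, ((T i z)^2 + (T i i)^2) ≤ f := by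
    rw [hf, ← Finset.add_sum_erase _ _ hzmem, ← hb]
    exact add_le_add le_rfl (Finset.sum_le_sum hrow)
  -- Cauchy--Schwarz on the remaining diagonal
  have hcs : (t - x)^2 ≤ ((n:ℝ) - 1) * ∑ i ∈ Finset.univ.erase z, (T i i)^2 := by
    rw [← htx, ← hcard]
    exact_mod_cast sq_sum_le_card_mul_sum_sq (s := Finset.univ.erase z) (f := fun i => T i i)
  -- key inequality
  have hkey : (t - x)^2 ≤ ((n:ℝ) - 1) * (f - 2*b + x^2) := by
    have h1 : ∑ i ∈ Finset.univ.erase z, ((T i z)^2 + (T i i)^2)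
        = (b - x^2) + ∑ i ∈ Finset.univ.erase z, (T i i)^2 := by
      rw [Finset.sum_add_distrib, hcol]
    have h2 : ∑ i ∈ Finset.univ.erase z, (T i i)^2 ≤ f - 2*b + x^2 := by
      have := hfge; rw [h1] at this; linarith
    calc (t - x)^2 ≤ ((n:ℝ) - 1) * ∑ i ∈ Finset.univ.erase z, (T i i)^2 := hcs
      _ ≤ ((n:ℝ) - 1) * (f - 2*b + x^2) := by
          exact mul_le_mul_of_nonneg_left h2 hn1.le
  have h2 : ((n:ℝ)*x - t)^2 + 2*(n:ℝ)*((n:ℝ)-1)*(b - x^2) ≤ ((n:ℝ)-1)*((n:ℝ)*f - t^2) := by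
    nlinarith [mul_le_mul_of_nonneg_left hkey (by positivity : (0:ℝ) ≤ (n:ℝ))]
  have hnf0 : (0:ℝ) ≤ ((n:ℝ)-1)*((n:ℝ)*f - t^2) := by nlinarith [sq_nonneg ((n:ℝ)*x - t), mul_nonneg (mul_nonneg (by linarith : (0:ℝ) ≤ 2*(n:ℝ)) hn1.le) (by linarith : (0:ℝ) ≤ b - x^2)]
  set D : ℝ := Real.sqrt (((n:ℝ)-1)*((n:ℝ)*f - t^2)) with hDdef
  have hD2 : D^2 = ((n:ℝ)-1)*((n:ℝ)*f - t^2) := Real.sq_sqrt hnf0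
  have hDnn : 0 ≤ D := Real.sqrt_nonneg _
  have hu : |(n:ℝ)*x - t| ≤ D := by
    have h : ((n:ℝ)*x - t)^2 ≤ D^2 := by nlinarith [mul_nonneg (mul_nonneg (by linarith : (0:ℝ) ≤ 2*(n:ℝ)) hn1.le) (by linarith : (0:ℝ) ≤ b - x^2)]
    rw [← Real.sqrt_sq hDnn, ← Real.sqrt_sq_eq_abs]
    exact Real.sqrt_le_sqrt h
  have htu : -(|t| * D) ≤ t * ((n:ℝ)*x - t) := by
    have h1 : |t * ((n:ℝ)*x - t)| ≤ |t| * D := by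
      rw [abs_mul]
      exact mul_le_mul_of_nonneg_left hu (abs_nonneg t)
    linarith [neg_abs_le (t * ((n:ℝ)*x - t))]
  have hp : (0:ℝ) ≤ ((n:ℝ)-2) * (t * ((n:ℝ)*x - t) + |t| * D) :=
    mul_nonneg (by linarith) (by linarith)
  have hq : (0:ℝ) ≤ ((n:ℝ)^2 - 2*(n:ℝ)) * (b - x^2) :=
    mul_nonneg (by nlinarith) (by linarith)
  have hslack : (0:ℝ) ≤ D^2 - ((n:ℝ)*x - t)^2 - 2*(n:ℝ)*((n:ℝ)-1)*(b - x^2) := by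
    rw [hD2]; linarith
  have hid : (n:ℝ)^2*(x*t - b) - (((n:ℝ)-1)*(2*t^2 - (n:ℝ)*f) - ((n:ℝ)-2)*|t| * D)
      = ((n:ℝ)-2)*(t*((n:ℝ)*x - t) + |t| * D)
        + (D^2 - ((n:ℝ)*x - t)^2 - 2*(n:ℝ)*((n:ℝ)-1)*(b - x^2))
        + ((n:ℝ)^2 - 2*(n:ℝ))*(b - x^2) := by
    rw [hD2]; ring
  have hmain : ((n:ℝ)-1)*(2*t^2 - (n:ℝ)*f) - ((n:ℝ)-2)*|t| * D ≤ (n:ℝ)^2 * (x*t - b) := by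
    linarith
  -- rewrite the sqrt
  have hst : Real.sqrt (((n:ℝ)*f - t^2) / ((n:ℝ)-1)) = D / ((n:ℝ)-1) := by
    rw [hDdef, show ((n:ℝ)-1)*((n:ℝ)*f - t^2) = ((n:ℝ)-1)^2 * (((n:ℝ)*f - t^2)/((n:ℝ)-1)) by
      field_simp, Real.sqrt_mul (sq_nonneg _), Real.sqrt_sq hn1.le]
    field_simp
  rw [ge_iff_le, hst, div_mul_eq_mul_div, div_le_iff₀ (by positivity : (0:ℝ) < (n:ℝ)^2)]
  have hexp : ((n:ℝ)-1) * (2*t^2 - (n:ℝ)*f - ((n:ℝ)-2)*|t| * (D/((n:ℝ)-1)))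
      = ((n:ℝ)-1)*(2*t^2 - (n:ℝ)*f) - ((n:ℝ)-2)*|t| * D := by
    field_simp
  rw [hexp]
  linarith [hmain]

theorem hineva_inequality_sum (n r : ℕ) (hn : 2 ≤ n) (hr : 1 ≤ r)
    (T : Fin r → Fin n → Fin n → ℝ)
    (hT : ∀ α i j, T α i j = T α j i) :
    ∑ α, (T α ⟨0, by omega⟩ ⟨0, by omega⟩ * (∑ i, T α i i)
        - ∑ j, (T α ⟨0, by omega⟩ j) ^ 2) ≥
      ((n : ℝ) - 1) / (n : ℝ) ^ 2 *
        ∑ α, (2 * (∑ i, T α i i) ^ 2 - (n : ℝ) * (∑ i, ∑ j, (T α i j) ^ 2)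
          - ((n : ℝ) - 2) * |∑ i, T α i i| *
            Real.sqrt (((n : ℝ) * (∑ i, ∑ j, (T α i j) ^ 2) - (∑ i, T α i i) ^ 2)
              / ((n : ℝ) - 1))) := by
  rw [ge_iff_le, Finset.mul_sum]
  exact Finset.sum_le_sum fun α _ => hineva_one n hn (T α) (hT α)
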